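/- arXiv:2602.14360 — 2 statements merged into one kernel-verified Lean document; each statement's English description precedes it below -/
import Mathlib

section
/- Simulation lemma underlying the Lipschitz aUCT bias term: let S and A be nonempty finite sets, γ ∈ [0,1), and let (R,P) and (R',P') be two MDPs on (S,A) with Bellman optimality operators T and T' and fixed points Q* = TQ* and Q*' = T'Q*'. If |R'(s,a)| ≤ R_max for all (s,a), then ‖Q* − Q*'‖_∞ ≤ (1/(1−γ)) · max_{(s,a)} [ |R(s,a) − R'(s,a)| + γ·(R_max/(1−γ)) · Σ_{s'} |P(s'|s,a) − P'(s'|s,a)| ]. -/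
open Finset

/-- The Bellman optimality operator for an MDP `(R, P)` on finite state/action
spaces with discount factor `γ`:
`(T Q)(s,a) = R(s,a) + γ · Σ_{s'} P(s'|s,a) · max_{a'} Q(s',a')`. -/
noncomputable def bellmanOp {S A : Type*} [Fintype S] [Fintype A] [Nonempty A]
    (γ : ℝ) (R : S → A → ℝ) (P : S → A → S → ℝ) (Q : S × A → ℝ) : S × A → ℝ :=
  fun p =>
    R p.1 p.2 + γ * ∑ s' : S, P p.1 p.2 s' *
      (Finset.univ.sup' Finset.univ_nonempty (fun a' : A => Q (s', a')))

lemma abs_sup'_le_aux {A : Type*} [Fintype A] [Nonempty A] (f : A → ℝ) (c : ℝ)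
    (h : ∀ a, |f a| ≤ c) :
    |Finset.univ.sup' Finset.univ_nonempty f| ≤ c := by
  rw [abs_le]
  obtain ⟨a0⟩ := ‹Nonempty A›
  constructor
  · exact le_trans (abs_le.mp (h a0)).1 (Finset.le_sup' f (Finset.mem_univ a0))
  · exact Finset.sup'_le _ _ fun a _ => (abs_le.mp (h a)).2

lemma abs_sup'_sub_sup'_le_aux {A : Type*} [Fintype A] [Nonempty A] (f g : A → ℝ) (c : ℝ)
    (h : ∀ a, |f a - g a| ≤ c) :
    |Finset.univ.sup' Finset.univ_nonempty f - Finset.univ.sup' Finset.univ_nonempty g| ≤ c := by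
  rw [abs_sub_le_iff]
  constructor
  · rw [sub_le_iff_le_add]
    refine Finset.sup'_le _ _ fun a _ => ?_
    have := (abs_le.mp (h a)).2
    have := Finset.le_sup' g (Finset.mem_univ a)
    linarith
  · rw [sub_le_iff_le_add]
    refine Finset.sup'_le _ _ fun a _ => ?_
    have := (abs_le.mp (h a)).1
    have := Finset.le_sup' f (Finset.mem_univ a)
    linarith

/-- Simulation lemma underlying the Lipschitz aUCT bias term.
For two MDPs `(R,P)` and `(R',P')` with optimal value functions `Q*` and `Q*'`,
and `|R'(s,a)| ≤ R_max`,
`‖Q* − Q*'‖_∞ ≤ (1/(1−γ)) · max_{(s,a)} [ |R(s,a) − R'(s,a)|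
   + γ·(R_max/(1−γ)) · Σ_{s'} |P(s'|s,a) − P'(s'|s,a)| ]`. -/
theorem simulation_lemma {S A : Type*} [Fintype S] [Fintype A]
    [Nonempty S] [Nonempty A]
    (γ : ℝ) (hγ0 : 0 ≤ γ) (hγ1 : γ < 1)
    (R R' : S → A → ℝ) (P P' : S → A → S → ℝ)
    (hP0 : ∀ s a s', 0 ≤ P s a s') (hP1 : ∀ s a, ∑ s' : S, P s a s' = 1)
    (hP0' : ∀ s a s', 0 ≤ P' s a s') (hP1' : ∀ s a, ∑ s' : S, P' s a s' = 1)
    (Rmax : ℝ) (hR' : ∀ s a, |R' s a| ≤ Rmax)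
    (Qstar Qstar' : S × A → ℝ)
    (hfix : bellmanOp γ R P Qstar = Qstar)
    (hfix' : bellmanOp γ R' P' Qstar' = Qstar') :
    ‖Qstar - Qstar'‖ ≤ (1 / (1 - γ)) *
      (Finset.univ.sup' Finset.univ_nonempty (fun p : S × A =>
        |R p.1 p.2 - R' p.1 p.2| +
          γ * (Rmax / (1 - γ)) * ∑ s' : S, |P p.1 p.2 s' - P' p.1 p.2 s'|)) := by
  have hγ1' : (0:ℝ) < 1 - γ := by linarith
  obtain ⟨s0⟩ := ‹Nonempty S›
  obtain ⟨a0⟩ := ‹Nonempty A›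
  have hRmax : 0 ≤ Rmax := le_trans (abs_nonneg _) (hR' s0 a0)
  set V : S → ℝ := fun s' => Finset.univ.sup' Finset.univ_nonempty
    (fun a' : A => Qstar (s', a')) with hV
  set V' : S → ℝ := fun s' => Finset.univ.sup' Finset.univ_nonempty
    (fun a' : A => Qstar' (s', a')) with hV'
  set M := ‖Qstar - Qstar'‖ with hM
  set B := ‖Qstar'‖ with hB
  have hMnn : 0 ≤ M := norm_nonneg _
  have hBnn : 0 ≤ B := norm_nonneg _
  -- pointwise norm bounds
  have habsM : ∀ p : S × A, |Qstar p - Qstar' p| ≤ M := fun p => by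
    have := norm_le_pi_norm (Qstar - Qstar') p
    simpa [Real.norm_eq_abs] using this
  have habsB : ∀ p : S × A, |Qstar' p| ≤ B := fun p => by
    have := norm_le_pi_norm Qstar' p
    simpa [Real.norm_eq_abs] using this
  have hVM : ∀ s', |V s' - V' s'| ≤ M := fun s' =>
    abs_sup'_sub_sup'_le_aux _ _ _ (fun a => habsM (s', a))
  have hV'B : ∀ s', |V' s'| ≤ B := fun s' =>
    abs_sup'_le_aux _ _ (fun a => habsB (s', a))
  -- bound B ≤ Rmax / (1 - γ)
  have hBbound : B ≤ Rmax / (1 - γ) := by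
    have hstep : B ≤ Rmax + γ * B := by
      rw [hB]
      rw [pi_norm_le_iff_of_nonneg (by positivity)]
      intro p
      have heq : Qstar' p = R' p.1 p.2 + γ * ∑ s' : S, P' p.1 p.2 s' * V' s' := by
        conv_lhs => rw [← hfix']
        rfl
      rw [Real.norm_eq_abs, heq]
      calc |R' p.1 p.2 + γ * ∑ s' : S, P' p.1 p.2 s' * V' s'|
          ≤ |R' p.1 p.2| + γ * |∑ s' : S, P' p.1 p.2 s' * V' s'| := by
            refine le_trans (abs_add_le _ _) ?_
            rw [abs_mul, abs_of_nonneg hγ0]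
        _ ≤ Rmax + γ * B := by
            gcongr
            · exact hR' _ _
            calc |∑ s' : S, P' p.1 p.2 s' * V' s'|
                ≤ ∑ s' : S, |P' p.1 p.2 s' * V' s'| := Finset.abs_sum_le_sum_abs _ _
              _ ≤ ∑ s' : S, P' p.1 p.2 s' * B := by
                  refine Finset.sum_le_sum fun s' _ => ?_
                  rw [abs_mul, abs_of_nonneg (hP0' _ _ _)]
                  exact mul_le_mul_of_nonneg_left (hV'B s') (hP0' _ _ _)
              _ = B := by rw [← Finset.sum_mul, hP1', one_mul]
    rw [le_div_iff₀ hγ1']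
    nlinarith
  -- the sup' expression
  set ε := Finset.univ.sup' Finset.univ_nonempty (fun p : S × A =>
      |R p.1 p.2 - R' p.1 p.2| +
        γ * (Rmax / (1 - γ)) * ∑ s' : S, |P p.1 p.2 s' - P' p.1 p.2 s'|) with hε
  have hεnn : 0 ≤ ε := by
    refine le_trans ?_ (Finset.le_sup' _ (Finset.mem_univ (s0, a0)))
    have : 0 ≤ γ * (Rmax / (1 - γ)) * ∑ s' : S, |P s0 a0 s' - P' s0 a0 s'| := by positivity
    positivity
  -- main contraction estimate
  have hmain : M ≤ ε + γ * M := by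
    rw [hM, pi_norm_le_iff_of_nonneg (by positivity)]
    intro p
    have heq : Qstar p = R p.1 p.2 + γ * ∑ s' : S, P p.1 p.2 s' * V s' := by
      conv_lhs => rw [← hfix]
      rfl
    have heq' : Qstar' p = R' p.1 p.2 + γ * ∑ s' : S, P' p.1 p.2 s' * V' s' := by
      conv_lhs => rw [← hfix']
      rfl
    have hsplit : Qstar p - Qstar' p =
        (R p.1 p.2 - R' p.1 p.2) + γ * (∑ s' : S, P p.1 p.2 s' * (V s' - V' s'))
          + γ * (∑ s' : S, (P p.1 p.2 s' - P' p.1 p.2 s') * V' s') := by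
      rw [heq, heq']
      simp only [sub_mul, mul_sub, Finset.sum_sub_distrib]
      ring
    rw [Pi.sub_apply, Real.norm_eq_abs, hsplit]
    have h1 : |γ * (∑ s' : S, P p.1 p.2 s' * (V s' - V' s'))| ≤ γ * M := by
      rw [abs_mul, abs_of_nonneg hγ0]
      refine mul_le_mul_of_nonneg_left ?_ hγ0
      calc |∑ s' : S, P p.1 p.2 s' * (V s' - V' s')|
          ≤ ∑ s' : S, |P p.1 p.2 s' * (V s' - V' s')| := Finset.abs_sum_le_sum_abs _ _
        _ ≤ ∑ s' : S, P p.1 p.2 s' * M := by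
            refine Finset.sum_le_sum fun s' _ => ?_
            rw [abs_mul, abs_of_nonneg (hP0 _ _ _)]
            exact mul_le_mul_of_nonneg_left (hVM s') (hP0 _ _ _)
        _ = M := by rw [← Finset.sum_mul, hP1, one_mul]
    have h2 : |γ * (∑ s' : S, (P p.1 p.2 s' - P' p.1 p.2 s') * V' s')| ≤
        γ * (Rmax / (1 - γ)) * ∑ s' : S, |P p.1 p.2 s' - P' p.1 p.2 s'| := by
      rw [abs_mul, abs_of_nonneg hγ0, mul_assoc]
      refine mul_le_mul_of_nonneg_left ?_ hγ0
      calc |∑ s' : S, (P p.1 p.2 s' - P' p.1 p.2 s') * V' s'|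
          ≤ ∑ s' : S, |(P p.1 p.2 s' - P' p.1 p.2 s') * V' s'| :=
            Finset.abs_sum_le_sum_abs _ _
        _ ≤ ∑ s' : S, |P p.1 p.2 s' - P' p.1 p.2 s'| * (Rmax / (1 - γ)) := by
            refine Finset.sum_le_sum fun s' _ => ?_
            rw [abs_mul]
            exact mul_le_mul_of_nonneg_left (le_trans (hV'B s') hBbound) (abs_nonneg _)
        _ = Rmax / (1 - γ) * ∑ s' : S, |P p.1 p.2 s' - P' p.1 p.2 s'| := by
            rw [← Finset.sum_mul, mul_comm]
    have hsup : |R p.1 p.2 - R' p.1 p.2| +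
        γ * (Rmax / (1 - γ)) * ∑ s' : S, |P p.1 p.2 s' - P' p.1 p.2 s'| ≤ ε := by
      rw [hε]
      exact Finset.le_sup' (fun p : S × A => |R p.1 p.2 - R' p.1 p.2| +
        γ * (Rmax / (1 - γ)) * ∑ s' : S, |P p.1 p.2 s' - P' p.1 p.2 s'|) (Finset.mem_univ p)
    calc |(R p.1 p.2 - R' p.1 p.2) + γ * (∑ s' : S, P p.1 p.2 s' * (V s' - V' s'))
          + γ * (∑ s' : S, (P p.1 p.2 s' - P' p.1 p.2 s') * V' s')|
        ≤ |R p.1 p.2 - R' p.1 p.2| + |γ * (∑ s' : S, P p.1 p.2 s' * (V s' - V' s'))|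
          + |γ * (∑ s' : S, (P p.1 p.2 s' - P' p.1 p.2 s') * V' s')| :=
          (abs_add_le _ _).trans (by gcongr; exact abs_add_le _ _)
      _ ≤ ε + γ * M := by linarith
  rw [hM] at hmain ⊢
  rw [one_div, ← div_eq_inv_mul, le_div_iff₀ hγ1']
  nlinarith
end

section
/- Graph-drift version of the value perturbation bound: let S and A be nonempty finite sets, γ ∈ [0,1), and let (R,P), (R',P') be MDPs on (S,A) with |R'(s,a)| ≤ R_max for all (s,a), and let Q*, Q*' be fixed points of their Bellman optimality operators. If for the constant κ = γ·R_max/(1−γ) one has max_{(s,a)} [ |R(s,a) − R'(s,a)| + κ · Σ_{s'} |P(s'|s,a) − P'(s'|s,a)| ] ≤ c·ΔG for some reals c ≥ 0 and ΔG ≥ 0, then ‖Q* − Q*'‖_∞ ≤ c·ΔG/(1−γ). -/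
open Finset

/-- abs of sup' is bounded. -/
lemma abs_sup'_le {A : Type*} [Fintype A] [Nonempty A] (f : A → ℝ) (M : ℝ)
    (h : ∀ a, |f a| ≤ M) :
    |Finset.univ.sup' Finset.univ_nonempty f| ≤ M := by
  rw [abs_le]
  constructor
  · obtain ⟨a⟩ := (inferInstance : Nonempty A)
    exact le_trans (neg_le_of_abs_le (h a)) (Finset.le_sup' f (Finset.mem_univ a))
  · exact Finset.sup'_le _ _ fun a _ => le_of_abs_le (h a)

/-- difference of sup's is bounded by uniform bound on differences. -/
lemma abs_sup'_sub_sup'_le {A : Type*} [Fintype A] [Nonempty A] (f g : A → ℝ) (M : ℝ)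
    (h : ∀ a, |f a - g a| ≤ M) :
    |Finset.univ.sup' Finset.univ_nonempty f - Finset.univ.sup' Finset.univ_nonempty g| ≤ M := by
  rw [abs_sub_le_iff]
  constructor
  · rw [sub_le_iff_le_add]
    refine Finset.sup'_le _ _ fun a _ => ?_
    have := le_of_abs_le (h a)
    have hg : g a ≤ Finset.univ.sup' Finset.univ_nonempty g :=
      Finset.le_sup' g (Finset.mem_univ a)
    linarith
  · rw [sub_le_iff_le_add]
    refine Finset.sup'_le _ _ fun a _ => ?_
    have := neg_le_of_abs_le (h a)
    have hf : f a ≤ Finset.univ.sup' Finset.univ_nonempty f :=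
      Finset.le_sup' f (Finset.mem_univ a)
    linarith

/-- Graph-drift version of the value perturbation bound. If, with
`κ = γ·R_max/(1−γ)`, the one-step model discrepancy
`max_{(s,a)} [ |R − R'| + κ · Σ_{s'} |P − P'| ]` is at most `c·ΔG`, then the
optimal value functions of the two MDPs satisfy
`‖Q* − Q*'‖_∞ ≤ c·ΔG/(1−γ)`. -/
theorem graph_drift_value_perturbation {S A : Type*} [Fintype S] [Fintype A]
    [Nonempty S] [Nonempty A]
    (γ : ℝ) (hγ0 : 0 ≤ γ) (hγ1 : γ < 1)
    (R R' : S → A → ℝ) (P P' : S → A → S → ℝ)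
    (hP0 : ∀ s a s', 0 ≤ P s a s') (hP1 : ∀ s a, ∑ s' : S, P s a s' = 1)
    (hP0' : ∀ s a s', 0 ≤ P' s a s') (hP1' : ∀ s a, ∑ s' : S, P' s a s' = 1)
    (Rmax : ℝ) (hR' : ∀ s a, |R' s a| ≤ Rmax)
    (Qstar Qstar' : S × A → ℝ)
    (hfix : bellmanOp γ R P Qstar = Qstar)
    (hfix' : bellmanOp γ R' P' Qstar' = Qstar')
    (c ΔG : ℝ) (hc : 0 ≤ c) (hΔG : 0 ≤ ΔG)
    (hdrift : Finset.univ.sup' Finset.univ_nonempty (fun p : S × A =>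
        |R p.1 p.2 - R' p.1 p.2| +
          (γ * Rmax / (1 - γ)) * ∑ s' : S, |P p.1 p.2 s' - P' p.1 p.2 s'|)
        ≤ c * ΔG) :
    ‖Qstar - Qstar'‖ ≤ c * ΔG / (1 - γ) := by
  have h1γ : 0 < 1 - γ := by linarith
  have hRmax : 0 ≤ Rmax := le_trans (abs_nonneg _) (hR' Classical.ofNonempty Classical.ofNonempty)
  set B : ℝ := ‖Qstar'‖ with hB
  have hB0 : 0 ≤ B := norm_nonneg _
  have hQb : ∀ p : S × A, |Qstar' p| ≤ B := fun p => by
    simpa [Real.norm_eq_abs] using norm_le_pi_norm Qstar' p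
  -- bound B ≤ Rmax + γ B
  have hBle : B ≤ Rmax + γ * B := by
    have : ∀ p : S × A, |Qstar' p| ≤ Rmax + γ * B := by
      intro p
      have := congrFun hfix' p
      rw [← this]
      unfold bellmanOp
      have hsum : |∑ s' : S, P' p.1 p.2 s' *
          Finset.univ.sup' Finset.univ_nonempty (fun a' : A => Qstar' (s', a'))| ≤ B := by
        calc |∑ s' : S, P' p.1 p.2 s' *
              Finset.univ.sup' Finset.univ_nonempty (fun a' : A => Qstar' (s', a'))|
            ≤ ∑ s' : S, |P' p.1 p.2 s' *
              Finset.univ.sup' Finset.univ_nonempty (fun a' : A => Qstar' (s', a'))| :=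
              Finset.abs_sum_le_sum_abs _ _
          _ ≤ ∑ s' : S, P' p.1 p.2 s' * B := by
              refine Finset.sum_le_sum fun s' _ => ?_
              rw [abs_mul, abs_of_nonneg (hP0' p.1 p.2 s')]
              exact mul_le_mul_of_nonneg_left
                (abs_sup'_le _ _ fun a' => hQb (s', a')) (hP0' p.1 p.2 s')
          _ = B := by rw [← Finset.sum_mul, hP1', one_mul]
      calc |R' p.1 p.2 + γ * ∑ s' : S, P' p.1 p.2 s' *
            Finset.univ.sup' Finset.univ_nonempty (fun a' : A => Qstar' (s', a'))|
          ≤ |R' p.1 p.2| + |γ * _| := abs_add_le _ _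
        _ ≤ Rmax + γ * B := by
            refine add_le_add (hR' _ _) ?_
            rw [abs_mul, abs_of_nonneg hγ0]
            exact mul_le_mul_of_nonneg_left hsum hγ0
    exact (pi_norm_le_iff_of_nonneg (by positivity : (0:ℝ) ≤ Rmax + γ * B)).mpr
      fun p => by simpa [Real.norm_eq_abs] using this p
  have hBbound : B ≤ Rmax / (1 - γ) := by
    rw [le_div_iff₀ h1γ]; nlinarith
  -- key pointwise bound
  set D : ℝ := ‖Qstar - Qstar'‖ with hD
  have hD0 : 0 ≤ D := norm_nonneg _
  have hDb : ∀ p : S × A, |Qstar p - Qstar' p| ≤ D := fun p => by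
    simpa [Real.norm_eq_abs] using norm_le_pi_norm (Qstar - Qstar') p
  have key : ∀ p : S × A, |Qstar p - Qstar' p| ≤ γ * D + c * ΔG := by
    intro p
    have hf := congrFun hfix p
    have hf' := congrFun hfix' p
    rw [← hf, ← hf']
    unfold bellmanOp
    set V : S → ℝ := fun s' => Finset.univ.sup' Finset.univ_nonempty (fun a' : A => Qstar (s', a'))
    set V' : S → ℝ := fun s' => Finset.univ.sup' Finset.univ_nonempty (fun a' : A => Qstar' (s', a'))
    have hVV' : ∀ s', |V s' - V' s'| ≤ D := fun s' =>
      abs_sup'_sub_sup'_le _ _ _ fun a' => hDb (s', a')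
    have hV'b : ∀ s', |V' s'| ≤ Rmax / (1 - γ) := fun s' =>
      le_trans (abs_sup'_le _ _ fun a' => hQb (s', a')) hBbound
    have expand : (R p.1 p.2 + γ * ∑ s' : S, P p.1 p.2 s' * V s') -
        (R' p.1 p.2 + γ * ∑ s' : S, P' p.1 p.2 s' * V' s')
        = γ * (∑ s' : S, P p.1 p.2 s' * (V s' - V' s'))
          + ((R p.1 p.2 - R' p.1 p.2) + γ * ∑ s' : S, (P p.1 p.2 s' - P' p.1 p.2 s') * V' s') := by
      have hs : ∑ s' : S, P p.1 p.2 s' * (V s' - V' s')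
          + ∑ s' : S, (P p.1 p.2 s' - P' p.1 p.2 s') * V' s'
          = ∑ s' : S, P p.1 p.2 s' * V s' - ∑ s' : S, P' p.1 p.2 s' * V' s' := by
        rw [← Finset.sum_add_distrib, ← Finset.sum_sub_distrib]
        exact Finset.sum_congr rfl fun s' _ => by ring
      linear_combination (-γ) * hs
    rw [expand]
    have h1 : |γ * (∑ s' : S, P p.1 p.2 s' * (V s' - V' s'))| ≤ γ * D := by
      rw [abs_mul, abs_of_nonneg hγ0]
      refine mul_le_mul_of_nonneg_left ?_ hγ0
      calc |∑ s' : S, P p.1 p.2 s' * (V s' - V' s')|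
          ≤ ∑ s' : S, |P p.1 p.2 s' * (V s' - V' s')| := Finset.abs_sum_le_sum_abs _ _
        _ ≤ ∑ s' : S, P p.1 p.2 s' * D := by
            refine Finset.sum_le_sum fun s' _ => ?_
            rw [abs_mul, abs_of_nonneg (hP0 p.1 p.2 s')]
            exact mul_le_mul_of_nonneg_left (hVV' s') (hP0 p.1 p.2 s')
        _ = D := by rw [← Finset.sum_mul, hP1, one_mul]
    have h2 : |(R p.1 p.2 - R' p.1 p.2) +
        γ * ∑ s' : S, (P p.1 p.2 s' - P' p.1 p.2 s') * V' s'| ≤ c * ΔG := by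
      have hstep : |(R p.1 p.2 - R' p.1 p.2) +
          γ * ∑ s' : S, (P p.1 p.2 s' - P' p.1 p.2 s') * V' s'|
          ≤ |R p.1 p.2 - R' p.1 p.2| +
            (γ * Rmax / (1 - γ)) * ∑ s' : S, |P p.1 p.2 s' - P' p.1 p.2 s'| := by
        refine le_trans (abs_add_le _ _) (add_le_add_right ?_ _)
        rw [abs_mul, abs_of_nonneg hγ0]
        have : |∑ s' : S, (P p.1 p.2 s' - P' p.1 p.2 s') * V' s'|
            ≤ ∑ s' : S, |P p.1 p.2 s' - P' p.1 p.2 s'| * (Rmax / (1 - γ)) := by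
          refine le_trans (Finset.abs_sum_le_sum_abs _ _) (Finset.sum_le_sum fun s' _ => ?_)
          rw [abs_mul]
          exact mul_le_mul_of_nonneg_left (hV'b s') (abs_nonneg _)
        calc γ * |∑ s' : S, (P p.1 p.2 s' - P' p.1 p.2 s') * V' s'|
            ≤ γ * ∑ s' : S, |P p.1 p.2 s' - P' p.1 p.2 s'| * (Rmax / (1 - γ)) :=
              mul_le_mul_of_nonneg_left this hγ0
          _ = (γ * Rmax / (1 - γ)) * ∑ s' : S, |P p.1 p.2 s' - P' p.1 p.2 s'| := by
              rw [← Finset.sum_mul]; ring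
      refine le_trans hstep (le_trans ?_ hdrift)
      exact Finset.le_sup' (f := fun p : S × A =>
        |R p.1 p.2 - R' p.1 p.2| +
          (γ * Rmax / (1 - γ)) * ∑ s' : S, |P p.1 p.2 s' - P' p.1 p.2 s'|) (Finset.mem_univ p)
    calc |γ * (∑ s' : S, P p.1 p.2 s' * (V s' - V' s'))
          + ((R p.1 p.2 - R' p.1 p.2) + γ * ∑ s' : S, (P p.1 p.2 s' - P' p.1 p.2 s') * V' s')|
        ≤ _ + _ := abs_add_le _ _
      _ ≤ γ * D + c * ΔG := add_le_add h1 h2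
  -- conclude
  have hDle : D ≤ γ * D + c * ΔG := by
    have hrhs : (0:ℝ) ≤ γ * D + c * ΔG := by positivity
    exact (pi_norm_le_iff_of_nonneg hrhs).mpr fun p => by
      simpa [Real.norm_eq_abs] using key p
  rw [le_div_iff₀ h1γ]
  nlinarith
end
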